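/- Let p, L, M be positive natural numbers, let A be a p×L complex matrix (A : Matrix (Fin p) (Fin L) ℂ) with A.rank = p, and let μ be a measure on the space of L×M complex matrices Matrix (Fin L) (Fin M) ℂ that is absolutely continuous with respect to the Lebesgue measure (volume). Then μ {Z : Matrix (Fin L) (Fin M) ℂ | (A * Z).rank ≠ min p M} = 0; that is, for μ-almost every Z, the product A * Z has full rank min(p, M). -/

import Mathlib

open MeasureTheory

noncomputable instance matrixMeasureSpace {n m : Type*} [Fintype n] [Fintype m] :
    MeasureSpace (Matrix n m ℂ) :=
  inferInstanceAs (MeasureSpace (n → m → ℂ))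


/-- Roots of a nonzero one-variable complex polynomial form a null set. -/
lemma aux_poly_null (q : Polynomial ℂ) (hq : q ≠ 0) :
    volume {z : ℂ | Polynomial.eval z q = 0} = 0 :=
  (Polynomial.finite_setOf_isRoot hq).measure_zero _

lemma aux_measSet {σ : Type*} [Fintype σ] (P : MvPolynomial σ ℂ) :
    MeasurableSet {x : σ → ℂ | MvPolynomial.eval x P = 0} :=
  (isClosed_singleton.preimage (MvPolynomial.continuous_eval P)).measurableSet

/-- Zero locus of a nonzero multivariate complex polynomial (Fin n variables) is null. -/
lemma aux_mv_null : ∀ (n : ℕ) (P : MvPolynomial (Fin n) ℂ), P ≠ 0 →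
    volume {x : Fin n → ℂ | MvPolynomial.eval x P = 0} = 0 := by
  intro n
  induction n with
  | zero =>
    intro P hP
    obtain ⟨a, rfl⟩ := MvPolynomial.C_surjective (Fin 0) P
    have ha : a ≠ 0 := fun h => hP (by rw [h, map_zero])
    have : {x : Fin 0 → ℂ | MvPolynomial.eval x (MvPolynomial.C a) = 0} = ∅ := by
      ext x; simp [ha]
    rw [this, measure_empty]
  | succ n ih =>
    intro P hP
    set Q := MvPolynomial.finSuccEquiv ℂ n P with hQdef
    have hQ : Q ≠ 0 := fun h => hP (EmbeddingLike.map_eq_zero_iff.mp h)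
    obtain ⟨k, hk⟩ : ∃ k, Q.coeff k ≠ 0 := by
      by_contra h
      push_neg at h
      exact hQ (Polynomial.ext fun k => by simp [h k])
    set N := {y : Fin n → ℂ | MvPolynomial.eval y (Q.coeff k) = 0} with hNdef
    have hN : volume N = 0 := ih _ hk
    -- the equivalence peeling off the first coordinate
    set e := MeasurableEquiv.piFinSuccAbove (fun _ : Fin (n + 1) => ℂ) 0 with hedef
    have hmp : MeasurePreserving (⇑e) volume volume :=
      volume_preserving_piFinSuccAbove (fun _ : Fin (n + 1) => ℂ) 0
    set T : Set (ℂ × (Fin n → ℂ)) :=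
      {q | MvPolynomial.eval (Fin.cons q.1 q.2) P = 0} with hTdef
    have hTcont : Continuous fun q : ℂ × (Fin n → ℂ) => MvPolynomial.eval (Fin.cons q.1 q.2) P := by
      apply (MvPolynomial.continuous_eval P).comp
      apply continuous_pi
      intro i
      refine Fin.cases ?_ ?_ i
      · exact continuous_fst
      · intro j
        exact (continuous_apply j).comp continuous_snd
    have hTmeas : MeasurableSet T := (isClosed_singleton.preimage hTcont).measurableSet
    have hpre : {x : Fin (n + 1) → ℂ | MvPolynomial.eval x P = 0} = ⇑e ⁻¹' T := by
      ext x
      have hcons : (Fin.cons (e x).1 (e x).2 : Fin (n + 1) → ℂ) = x := by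
        ext i
        refine Fin.cases ?_ ?_ i
        · rfl
        · intro j
          show (e x).2 j = _
          simp [hedef, MeasurableEquiv.piFinSuccAbove_apply, Fin.insertNthEquiv,
            Fin.removeNth, Fin.succAbove, Fin.tail]
      simp only [hTdef, Set.mem_preimage, Set.mem_setOf_eq, hcons]
    rw [hpre, hmp.measure_preimage hTmeas.nullMeasurableSet]
    -- Fubini
    rw [Measure.volume_eq_prod, Measure.prod_apply_symm hTmeas]
    have : ∀ᵐ y : Fin n → ℂ, volume ((fun x => (x, y)) ⁻¹' T) = 0 := by
      have hNc : ∀ᵐ y : Fin n → ℂ, y ∉ N := by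
        rw [ae_iff]
        simpa using hN
      filter_upwards [hNc] with y hy
      have hqy : (Q.map (MvPolynomial.eval y)) ≠ 0 := by
        intro h
        apply hy
        have : (Q.map (MvPolynomial.eval y)).coeff k = 0 := by rw [h]; simp
        rw [Polynomial.coeff_map] at this
        exact this
      have : ((fun x => (x, y)) ⁻¹' T) = {a : ℂ | Polynomial.eval a (Q.map (MvPolynomial.eval y)) = 0} := by
        ext a
        simp only [Set.mem_preimage, hTdef, Set.mem_setOf_eq]
        rw [MvPolynomial.eval_eq_eval_mv_eval']
      rw [this]
      exact aux_poly_null _ hqy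
    rw [lintegral_congr_ae (this.mono fun y hy => hy)]
    simp


section
variable {σ : Type*} [Fintype σ]

lemma aux_mv_null' (P : MvPolynomial σ ℂ) (hP : P ≠ 0) :
    volume {x : σ → ℂ | MvPolynomial.eval x P = 0} = 0 := by
  set f : Fin (Fintype.card σ) ≃ σ := (Fintype.equivFin σ).symm with hfdef
  set e := MeasurableEquiv.piCongrLeft (fun _ : σ => ℂ) f with hedef
  have hmp : MeasurePreserving (⇑e) volume volume :=
    volume_measurePreserving_piCongrLeft _ f
  have hVmeas : MeasurableSet {x : σ → ℂ | MvPolynomial.eval x P = 0} :=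
    (isClosed_singleton.preimage (MvPolynomial.continuous_eval P)).measurableSet
  rw [← hmp.measure_preimage hVmeas.nullMeasurableSet]
  have hpre : ⇑e ⁻¹' {x : σ → ℂ | MvPolynomial.eval x P = 0}
      = {x : Fin (Fintype.card σ) → ℂ |
          MvPolynomial.eval x (MvPolynomial.rename f.symm P) = 0} := by
    ext x
    have hex : e x = x ∘ f.symm := by
      funext i
      rw [hedef, MeasurableEquiv.coe_piCongrLeft]
      conv_lhs => rw [← f.apply_symm_apply i]
      exact Equiv.piCongrLeft_apply_apply (fun _ : σ => ℂ) f x (f.symm i)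
    rw [Set.mem_preimage, Set.mem_setOf_eq, Set.mem_setOf_eq, hex,
      MvPolynomial.eval_rename]
  rw [hpre]
  exact aux_mv_null _ _ (fun h => hP (by
    have := (MvPolynomial.rename_injective (R := ℂ) _ f.symm.injective)
    exact this (by rw [h, map_zero])))

end

lemma aux_uncurry_mp (L M : ℕ) :
    MeasurePreserving (Sigma.uncurry : (Fin L → Fin M → ℂ) → ((_ : Fin L) × Fin M → ℂ))
      volume volume := by
  have hmeas : Measurable (Sigma.uncurry : (Fin L → Fin M → ℂ) → ((_ : Fin L) × Fin M → ℂ)) :=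
    measurable_pi_lambda _ fun ia =>
      (measurable_pi_apply ia.2).comp (measurable_pi_apply ia.1)
  refine ⟨hmeas, ?_⟩
  rw [(volume_pi : (volume : Measure ((_ : Fin L) × Fin M → ℂ)) = _)]
  refine (Measure.pi_eq (μ := fun _ : (_ : Fin L) × Fin M => (volume : Measure ℂ))
    fun t ht => ?_).symm
  rw [Measure.map_apply hmeas (MeasurableSet.univ_pi ht)]
  have hpre : Sigma.uncurry ⁻¹' (Set.univ.pi t)
      = Set.univ.pi fun i : Fin L => Set.univ.pi fun j : Fin M => t ⟨i, j⟩ := by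
    ext x
    simp only [Set.mem_preimage, Set.mem_univ_pi, Sigma.uncurry, Sigma.forall]
  rw [hpre, volume_pi_pi]
  simp_rw [volume_pi_pi]
  rw [← Finset.univ_sigma_univ, Finset.prod_sigma]

theorem rank_deficient_product_null_of_absolutelyContinuous
    (p L M : ℕ) (hp : 0 < p) (hL : 0 < L) (hM : 0 < M)
    (A : Matrix (Fin p) (Fin L) ℂ) (hA : A.rank = p)
    (μ : Measure (Matrix (Fin L) (Fin M) ℂ)) (hμ : μ ≪ volume) :
    μ {Z : Matrix (Fin L) (Fin M) ℂ | (A * Z).rank ≠ min p M} = 0 := by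
  set k := min p M with hk
  have hkp : k ≤ p := min_le_left _ _
  have hkM : k ≤ M := min_le_right _ _
  set r : Fin k → Fin p := Fin.castLE hkp with hr
  set c : Fin k → Fin M := Fin.castLE hkM with hc
  set P : MvPolynomial (Fin L × Fin M) ℂ :=
    (Matrix.of fun i j : Fin k =>
      ∑ l : Fin L, MvPolynomial.C (A (r i) l) * MvPolynomial.X ((l, c j) : Fin L × Fin M)).det
    with hPdef
  set φ : Matrix (Fin L) (Fin M) ℂ → (Fin L × Fin M → ℂ) :=
    fun Z q => Z q.1 q.2 with hφdef
  -- evaluation of P at a matrix computes the minor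
  have heval : ∀ Z : Matrix (Fin L) (Fin M) ℂ,
      MvPolynomial.eval (φ Z) P = ((A * Z).submatrix r c).det := by
    intro Z
    rw [hPdef, RingHom.map_det]
    congr 1
    ext i j
    simp [Matrix.mul_apply, mul_comm, hφdef]
  -- surjectivity of A
  have hsurj : Function.Surjective A.mulVecLin := by
    rw [← LinearMap.range_eq_top]
    apply Submodule.eq_top_of_finrank_eq
    rw [← Matrix.rank, hA]
    simp
  choose v hv using fun m : Fin M =>
    hsurj (fun i : Fin p => if (i : ℕ) = (m : ℕ) then (1 : ℂ) else 0)
  -- P is nonzero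
  have hP : P ≠ 0 := by
    intro h0
    set Z₀ : Matrix (Fin L) (Fin M) ℂ := Matrix.of fun l m => v m l with hZ₀
    have h1 : ((A * Z₀).submatrix r c) = 1 := by
      ext i j
      have : (A * Z₀) (r i) (c j) = A.mulVecLin (v (c j)) (r i) := by
        simp [Matrix.mul_apply, Matrix.mulVecLin_apply, Matrix.mulVec, dotProduct, hZ₀]
      rw [Matrix.submatrix_apply, this, hv]
      simp only [hr, hc, Fin.coe_castLE, Matrix.one_apply, Fin.val_eq_val]
    have := heval Z₀
    rw [h0, map_zero, h1] at this
    simp at this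
  -- rank inequality: off the zero locus of P the rank is full
  have hincl : {Z : Matrix (Fin L) (Fin M) ℂ | (A * Z).rank ≠ k}
      ⊆ φ ⁻¹' {x : Fin L × Fin M → ℂ | MvPolynomial.eval x P = 0} := by
    intro Z hZ
    by_contra hcon
    apply hZ
    have hdet : ((A * Z).submatrix r c).det ≠ 0 := by
      rw [← heval Z]; exact hcon
    set B := A * Z with hB
    have hunit : IsUnit (B.submatrix r c) := by
      rw [Matrix.isUnit_iff_isUnit_det]
      exact isUnit_iff_ne_zero.mpr hdet
    have hranksub : (B.submatrix r c).rank = k := by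
      rw [Matrix.rank_of_isUnit _ hunit, Fintype.card_fin]
    have hd1 : B.submatrix r c
        = (1 : Matrix (Fin p) (Fin p) ℂ).submatrix r _root_.id * B.submatrix _root_.id c := by
      ext i j
      simp [Matrix.mul_apply, Matrix.one_apply]
    have hd2 : B.submatrix _root_.id c
        = B * (1 : Matrix (Fin M) (Fin M) ℂ).submatrix _root_.id c := by
      ext i j
      simp [Matrix.mul_apply, Matrix.one_apply]
    have hle1 : (B.submatrix r c).rank ≤ (B.submatrix _root_.id c).rank := by
      rw [hd1]; exact Matrix.rank_mul_le_right _ _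
    have hle2 : (B.submatrix _root_.id c).rank ≤ B.rank := by
      rw [hd2]; exact Matrix.rank_mul_le_left _ _
    have hge : k ≤ B.rank := hranksub ▸ (hle1.trans hle2)
    have hle : B.rank ≤ k := le_min
      ((Matrix.rank_le_card_height B).trans_eq (Fintype.card_fin p))
      ((Matrix.rank_le_card_width B).trans_eq (Fintype.card_fin M))
    exact le_antisymm hle hge
  -- measure-preserving flattening
  have hVmeas : MeasurableSet {x : Fin L × Fin M → ℂ | MvPolynomial.eval x P = 0} :=
    (isClosed_singleton.preimage (MvPolynomial.continuous_eval P)).measurableSet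
  have hVnull : volume {x : Fin L × Fin M → ℂ | MvPolynomial.eval x P = 0} = 0 :=
    aux_mv_null' P hP
  set g := MeasurableEquiv.piCongrLeft (fun _ : Fin L × Fin M => ℂ)
    (Equiv.sigmaEquivProd (Fin L) (Fin M)) with hgdef
  have hgmp : MeasurePreserving (⇑g) volume volume :=
    volume_measurePreserving_piCongrLeft _ _
  have hφeq : φ = ⇑g ∘ (Sigma.uncurry : (Fin L → Fin M → ℂ) → ((_ : Fin L) × Fin M → ℂ)) := by
    funext Z
    funext q
    have : g (Sigma.uncurry Z) ((Equiv.sigmaEquivProd (Fin L) (Fin M)) ⟨q.1, q.2⟩)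
        = Sigma.uncurry Z ⟨q.1, q.2⟩ := by
      rw [hgdef, MeasurableEquiv.coe_piCongrLeft]
      exact Equiv.piCongrLeft_apply_apply (fun _ : Fin L × Fin M => ℂ) _ _ _
    show Z q.1 q.2 = g (Sigma.uncurry Z) q
    simpa [Sigma.uncurry] using this.symm
  have hφmp : MeasurePreserving φ volume volume := by
    rw [hφeq]
    exact hgmp.comp (aux_uncurry_mp L M)
  have hvol : volume {Z : Matrix (Fin L) (Fin M) ℂ | (A * Z).rank ≠ k} = 0 := by
    refine le_antisymm ?_ zero_le
    calc volume {Z : Matrix (Fin L) (Fin M) ℂ | (A * Z).rank ≠ k}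
        ≤ volume (φ ⁻¹' {x : Fin L × Fin M → ℂ | MvPolynomial.eval x P = 0}) :=
          measure_mono hincl
      _ = 0 := by rw [hφmp.measure_preimage hVmeas.nullMeasurableSet, hVnull]
  exact hμ hvol
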